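/- If E : Fin p → Fin q → ℕ is a constant-diagonal (Toeplitz) matrix, i.e., E(i,j) depends only on j − i, then E is 4-cycle free if and only if the underlying sequence a (with E(i,j) = a_{j−i+p}) is a good sequence for (p,q). -/
import Mathlib

set_option maxHeartbeats 2000000 in
theorem toeplitz_4cycle_free_iff_good (p q : ℕ) (hp : 0 < p) (hpq : p < q)
    (a : ℕ → ℕ) (E : Fin p → Fin q → ℕ)
    (hE : ∀ (i : Fin p) (j : Fin q), E i j = a (j.val + p - i.val)) :
    (∀ i₁ i₂ : Fin p, ∀ j₁ j₂ : Fin q, i₁ < i₂ → j₁ < j₂ →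
      (E i₂ j₁ : ℤ) - E i₁ j₁ ≠ (E i₁ j₂ : ℤ) - E i₂ j₂) ↔
    (∀ n₁ n₂ n₃ : ℕ, 1 ≤ n₁ → n₁ < n₂ → n₂ < n₃ → n₃ ≤ p + q - 1 →
      n₂ - n₁ < p → n₃ - n₂ < q →
      (a (n₁ + (n₃ - n₂)) : ℤ) - a n₃ ≠ (a n₂ : ℤ) - a n₁) := by
  have hq : 0 < q := lt_trans hp hpq
  constructor
  · intro h n₁ n₂ n₃ h1 h2 h3 h4 h5 h6 heq
    have e1 : (n₂ - p) + p - (p - n₂ + (n₂ - n₁)) = n₁ := by omega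
    have e2 : (n₂ - p) + p - (p - n₂) = n₂ := by omega
    have e3 : (n₂ - p + (n₃ - n₂)) + p - (p - n₂) = n₃ := by omega
    have e4 : (n₂ - p + (n₃ - n₂)) + p - (p - n₂ + (n₂ - n₁)) = n₁ + (n₃ - n₂) := by omega
    have H := h ⟨p - n₂, by omega⟩ ⟨p - n₂ + (n₂ - n₁), by omega⟩
        ⟨n₂ - p, by omega⟩ ⟨n₂ - p + (n₃ - n₂), by omega⟩
        (by simp only [Fin.mk_lt_mk]; omega) (by simp only [Fin.mk_lt_mk]; omega)
    rw [hE, hE, hE, hE] at H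
    simp only [Fin.val_mk] at H
    rw [e1, e2, e3, e4] at H
    apply H
    linarith [heq]
  · intro h i₁ i₂ j₁ j₂ hi hj heq
    have hi2 := i₂.isLt
    have hi1 := i₁.isLt
    have hj2 := j₂.isLt
    have hj1 := j₁.isLt
    have hii : (i₁ : ℕ) < i₂ := hi
    have hjj : (j₁ : ℕ) < j₂ := hj
    have H := h ((j₁ : ℕ) + p - i₂) ((j₁ : ℕ) + p - i₁) ((j₂ : ℕ) + p - i₁)
      (by omega) (by omega) (by omega) (by omega) (by omega) (by omega)
    have e1 : (j₁ : ℕ) + p - i₂ + (((j₂ : ℕ) + p - i₁) - ((j₁ : ℕ) + p - i₁))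
        = (j₂ : ℕ) + p - i₂ := by omega
    rw [e1, ← hE, ← hE, ← hE, ← hE] at H
    apply H
    linarith [heq]
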